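/- If R ∈ A⊗A⊗A satisfies R¹⊗aR²⊗R³ = R¹⊗R²⊗R³a for all a ∈ A, R¹R²⊗R³ = 1⊗1 and R²⊗R³R¹ = 1⊗1, then the additional normalizing condition R¹⊗R²R³ = 1⊗1 holds. -/

import Mathlib

open TensorProduct

/-- If `R ∈ A ⊗ A ⊗ A` satisfies `R¹ ⊗ aR² ⊗ R³ = R¹ ⊗ R² ⊗ R³a` for all
`a ∈ A`, `R¹R² ⊗ R³ = 1 ⊗ 1` and `R² ⊗ R³R¹ = 1 ⊗ 1`, then the additional normalizing
condition `R¹ ⊗ R²R³ = 1 ⊗ 1` holds. -/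
theorem additional_normalizing_condition_of_R_matrix
    (k A : Type*) [CommRing k] [Ring A] [Algebra k A]
    (ι : Type*) (s : Finset ι) (x y z : ι → A)
    (hcen : ∀ a : A,
      ∑ i ∈ s, x i ⊗ₜ[k] (a * y i) ⊗ₜ[k] z i
        = ∑ i ∈ s, x i ⊗ₜ[k] y i ⊗ₜ[k] (z i * a))
    (hnorm1 : ∑ i ∈ s, (x i * y i) ⊗ₜ[k] z i = (1 : A) ⊗ₜ[k] (1 : A))
    (hnorm2 : ∑ i ∈ s, y i ⊗ₜ[k] (z i * x i) = (1 : A) ⊗ₜ[k] (1 : A)) :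
    ∑ i ∈ s, x i ⊗ₜ[k] (y i * z i) = (1 : A) ⊗ₜ[k] (1 : A) := by
  classical
  -- `C2 : ∑ i, z i ⊗ x i * y i = 1 ⊗ 1`
  have hC2 : ∑ i ∈ s, z i ⊗ₜ[k] (x i * y i) = (1 : A) ⊗ₜ[k] (1 : A) := by
    -- Step 1: for each `i`, apply the linear map `p ⊗ (q ⊗ r) ↦ (z i * (p * q)) ⊗ r`
    -- to `hcen (x i * y i)`.
    have key1 : ∀ i : ι,
        ∑ j ∈ s, (z i * (x j * (x i * (y i * y j)))) ⊗ₜ[k] z j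
          = ∑ j ∈ s, (z i * (x j * y j)) ⊗ₜ[k] (z j * (x i * y i)) := by
      intro i
      set L : (A ⊗[k] A) ⊗[k] A →ₗ[k] A ⊗[k] A :=
        (TensorProduct.map ((LinearMap.mulLeft k (z i)).comp (LinearMap.mul' k A))
          LinearMap.id) with hL
      have h : L (∑ j ∈ s, x j ⊗ₜ[k] ((x i * y i) * y j) ⊗ₜ[k] z j)
          = L (∑ j ∈ s, x j ⊗ₜ[k] y j ⊗ₜ[k] (z j * (x i * y i))) := by
        rw [hcen (x i * y i)]
      simpa [hL, map_sum, mul_assoc] using h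
    -- Step 2: for each `i`, apply `p ⊗ q ↦ (z i * p) ⊗ (q * (x i * y i))` to `hnorm1`.
    have key2 : ∀ i : ι,
        ∑ j ∈ s, (z i * (x j * y j)) ⊗ₜ[k] (z j * (x i * y i))
          = z i ⊗ₜ[k] (x i * y i) := by
      intro i
      set L : A ⊗[k] A →ₗ[k] A ⊗[k] A :=
        TensorProduct.map (LinearMap.mulLeft k (z i))
          (LinearMap.mulRight k (x i * y i)) with hL
      have h : L (∑ j ∈ s, (x j * y j) ⊗ₜ[k] z j) = L ((1 : A) ⊗ₜ[k] (1 : A)) := by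
        rw [hnorm1]
      simpa [hL, map_sum, mul_assoc] using h
    -- Step 3: for each `j`, apply `p ⊗ q ↦ ((q * x j) * (p * y j)) ⊗ z j` to `hnorm1`.
    have key3 : ∀ j : ι,
        ∑ i ∈ s, (z i * (x j * (x i * (y i * y j)))) ⊗ₜ[k] z j
          = (x j * y j) ⊗ₜ[k] z j := by
      intro j
      set L : A ⊗[k] A →ₗ[k] A ⊗[k] A :=
        (((TensorProduct.mk k A A).flip (z j)).comp
          ((LinearMap.mul' k A).comp
            ((TensorProduct.map (LinearMap.mulRight k (x j)) (LinearMap.mulRight k (y j))).comp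
              (TensorProduct.comm k A A).toLinearMap))) with hL
      have h : L (∑ i ∈ s, (x i * y i) ⊗ₜ[k] z i) = L ((1 : A) ⊗ₜ[k] (1 : A)) := by
        rw [hnorm1]
      simpa [hL, map_sum, mul_assoc] using h
    calc
      ∑ i ∈ s, z i ⊗ₜ[k] (x i * y i)
          = ∑ i ∈ s, ∑ j ∈ s, (z i * (x j * y j)) ⊗ₜ[k] (z j * (x i * y i)) := by
            exact Finset.sum_congr rfl fun i _ => (key2 i).symm
      _ = ∑ i ∈ s, ∑ j ∈ s, (z i * (x j * (x i * (y i * y j)))) ⊗ₜ[k] z j := by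
            exact Finset.sum_congr rfl fun i _ => (key1 i).symm
      _ = ∑ j ∈ s, ∑ i ∈ s, (z i * (x j * (x i * (y i * y j)))) ⊗ₜ[k] z j :=
            Finset.sum_comm
      _ = ∑ j ∈ s, (x j * y j) ⊗ₜ[k] z j :=
            Finset.sum_congr rfl fun j _ => key3 j
      _ = (1 : A) ⊗ₜ[k] (1 : A) := hnorm1
  -- Main chain.
  -- Step 4: for each `i`, apply `p ⊗ (q ⊗ r) ↦ r ⊗ ((p * q) * (y i * z i))` to `hcen (x i)`.
  have key4 : ∀ i : ι,
      ∑ j ∈ s, z j ⊗ₜ[k] (x j * (x i * (y j * (y i * z i))))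
        = ∑ j ∈ s, (z j * x i) ⊗ₜ[k] (x j * (y j * (y i * z i))) := by
    intro i
    set L : (A ⊗[k] A) ⊗[k] A →ₗ[k] A ⊗[k] A :=
      ((TensorProduct.comm k A A).toLinearMap.comp
        ((TensorProduct.map ((LinearMap.mulRight k (y i * z i)).comp (LinearMap.mul' k A))
          LinearMap.id))) with hL
    have h : L (∑ j ∈ s, x j ⊗ₜ[k] (x i * y j) ⊗ₜ[k] z j)
        = L (∑ j ∈ s, x j ⊗ₜ[k] y j ⊗ₜ[k] (z j * x i)) := by
      rw [hcen (x i)]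
    simpa [hL, map_sum, mul_assoc] using h
  -- Step 5: for each `i`, apply `p ⊗ q ↦ (p * x i) ⊗ (q * (y i * z i))` to `hC2`.
  have key5 : ∀ i : ι,
      ∑ j ∈ s, (z j * x i) ⊗ₜ[k] (x j * (y j * (y i * z i)))
        = x i ⊗ₜ[k] (y i * z i) := by
    intro i
    set L : A ⊗[k] A →ₗ[k] A ⊗[k] A :=
      TensorProduct.map (LinearMap.mulRight k (x i))
        (LinearMap.mulRight k (y i * z i)) with hL
    have h : L (∑ j ∈ s, z j ⊗ₜ[k] (x j * y j)) = L ((1 : A) ⊗ₜ[k] (1 : A)) := by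
      rw [hC2]
    simpa [hL, map_sum, mul_assoc] using h
  -- Step 6: for each `j`, apply `p ⊗ (q ⊗ r) ↦ z j ⊗ (x j * ((p * q) * r))` to `hcen (y j)`.
  have key6 : ∀ j : ι,
      ∑ i ∈ s, z j ⊗ₜ[k] (x j * (x i * (y j * (y i * z i))))
        = ∑ i ∈ s, z j ⊗ₜ[k] (x j * (x i * (y i * (z i * y j)))) := by
    intro j
    set L : (A ⊗[k] A) ⊗[k] A →ₗ[k] A ⊗[k] A :=
      ((TensorProduct.mk k A A (z j)).comp
        ((LinearMap.mulLeft k (x j)).comp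
          ((LinearMap.mul' k A).comp
            ((TensorProduct.map (LinearMap.mul' k A) LinearMap.id))))) with hL
    have h : L (∑ i ∈ s, x i ⊗ₜ[k] (y j * y i) ⊗ₜ[k] z i)
        = L (∑ i ∈ s, x i ⊗ₜ[k] y i ⊗ₜ[k] (z i * y j)) := by
      rw [hcen (y j)]
    simpa [hL, map_sum, mul_assoc] using h
  -- Step 7: for each `j`, apply `p ⊗ q ↦ z j ⊗ ((x j * (p * q)) * y j)` to `hnorm1`.
  have key7 : ∀ j : ι,
      ∑ i ∈ s, z j ⊗ₜ[k] (x j * (x i * (y i * (z i * y j))))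
        = z j ⊗ₜ[k] (x j * y j) := by
    intro j
    set L : A ⊗[k] A →ₗ[k] A ⊗[k] A :=
      ((TensorProduct.mk k A A (z j)).comp
        ((LinearMap.mulRight k (y j)).comp
          ((LinearMap.mulLeft k (x j)).comp (LinearMap.mul' k A)))) with hL
    have h : L (∑ i ∈ s, (x i * y i) ⊗ₜ[k] z i) = L ((1 : A) ⊗ₜ[k] (1 : A)) := by
      rw [hnorm1]
    simpa [hL, map_sum, mul_assoc] using h
  calc
    ∑ i ∈ s, x i ⊗ₜ[k] (y i * z i)
        = ∑ i ∈ s, ∑ j ∈ s, (z j * x i) ⊗ₜ[k] (x j * (y j * (y i * z i))) :=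
          Finset.sum_congr rfl fun i _ => (key5 i).symm
    _ = ∑ i ∈ s, ∑ j ∈ s, z j ⊗ₜ[k] (x j * (x i * (y j * (y i * z i)))) :=
          Finset.sum_congr rfl fun i _ => (key4 i).symm
    _ = ∑ j ∈ s, ∑ i ∈ s, z j ⊗ₜ[k] (x j * (x i * (y j * (y i * z i)))) :=
          Finset.sum_comm
    _ = ∑ j ∈ s, ∑ i ∈ s, z j ⊗ₜ[k] (x j * (x i * (y i * (z i * y j)))) :=
          Finset.sum_congr rfl fun j _ => key6 j
    _ = ∑ j ∈ s, z j ⊗ₜ[k] (x j * y j) :=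
          Finset.sum_congr rfl fun j _ => key7 j
    _ = (1 : A) ⊗ₜ[k] (1 : A) := hC2
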